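/- Let Ω be a measurable space, 𝒫 a nonempty family of probability measures on Ω, 𝕐 a measurable space, Y : Ω → 𝕐 measurable, A ⊆ 𝕐 a measurable set, and V : Ω → ℝ a measurable function taking values in [0,1] (the data-dependent lower prediction probability ω ↦ Π_{D(ω)}(A) of the assertion A). Suppose one-sided contraction holds: there exists γ ∈ ℝ with V(ω) ≥ γ for all ω ∈ Ω and γ > inf_{P∈𝒫} P{ω : Y(ω) ∈ A}. Then validity fails at A: there exists α ∈ [0,1] such that sup_{P∈𝒫} P({ω : V(ω) ≥ 1 − α} ∩ {ω : Y(ω) ∉ A}) > α. -/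

import Mathlib

open MeasureTheory

/-- If the data-dependent lower prediction probability `V` of an assertion `A`
is uniformly bounded below by some `γ` strictly above `inf_{P ∈ 𝒫} P{Y ∈ A}` (one-sided
contraction), then validity fails at `A`. -/
theorem stmt_2 {Ω 𝕐 : Type*} [MeasurableSpace Ω] [MeasurableSpace 𝕐]
    (𝓟 : Set (Measure Ω)) (h𝓟 : 𝓟.Nonempty) (hprob : ∀ P ∈ 𝓟, IsProbabilityMeasure P)
    (Y : Ω → 𝕐) (hY : Measurable Y) (A : Set 𝕐) (hA : MeasurableSet A)
    (V : Ω → ℝ) (hV : Measurable V) (hV01 : ∀ ω, V ω ∈ Set.Icc (0 : ℝ) 1)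
    (γ : ℝ) (hγbd : ∀ ω, γ ≤ V ω)
    (hcontr : ⨅ P ∈ 𝓟, P {ω | Y ω ∈ A} < ENNReal.ofReal γ) :
    ∃ α ∈ Set.Icc (0 : ℝ) 1,
      ENNReal.ofReal α < ⨆ P ∈ 𝓟, P ({ω | 1 - α ≤ V ω} ∩ {ω | Y ω ∉ A}) := by
  -- extract a witness measure
  obtain ⟨P₀, hP₀mem, hP₀⟩ : ∃ P ∈ 𝓟, P {ω | Y ω ∈ A} < ENNReal.ofReal γ := by
    simpa [iInf_lt_iff] using hcontr
  haveI : IsProbabilityMeasure P₀ := hprob P₀ hP₀mem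
  -- γ > 0
  have hγpos : 0 < γ := by
    by_contra h
    push_neg at h
    rw [ENNReal.ofReal_eq_zero.2 h] at hP₀
    exact (not_lt_of_ge zero_le) hP₀
  -- Ω is nonempty (a probability measure exists)
  have hΩ : Nonempty Ω := by
    by_contra h
    have : P₀ Set.univ = 0 := by
      have : (Set.univ : Set Ω) = ∅ := by
        simpa [Set.eq_empty_iff_forall_notMem] using fun x => (h ⟨x⟩)
      simp [this]
    simp [measure_univ] at this
  have hγle1 : γ ≤ 1 := le_trans (hγbd hΩ.some) (hV01 hΩ.some).2
  refine ⟨1 - γ, ⟨by linarith, by linarith⟩, ?_⟩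
  have hset : {ω : Ω | 1 - (1 - γ) ≤ V ω} = Set.univ := by
    ext ω
    simpa using le_trans (by linarith : γ ≤ γ) (by simpa using hγbd ω)
  have hset' : ({ω : Ω | 1 - (1 - γ) ≤ V ω} ∩ {ω | Y ω ∉ A}) = {ω | Y ω ∈ A}ᶜ := by
    rw [hset, Set.univ_inter]
    rfl
  have hmeas : MeasurableSet {ω | Y ω ∈ A} := hY hA
  have hcompl : P₀ {ω | Y ω ∈ A}ᶜ = 1 - P₀ {ω | Y ω ∈ A} := by
    rw [measure_compl hmeas (measure_ne_top _ _), measure_univ]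
  have hlt : ENNReal.ofReal (1 - γ) < P₀ {ω | Y ω ∈ A}ᶜ := by
    rw [hcompl]
    have h1 : ENNReal.ofReal (1 - γ) = 1 - ENNReal.ofReal γ := by
      rw [ENNReal.ofReal_sub _ (le_of_lt hγpos), ENNReal.ofReal_one]
    rw [h1]
    exact ((ENNReal.cancel_of_ne ENNReal.one_ne_top).tsub_lt_tsub_iff_left_of_le (ENNReal.cancel_of_ne ENNReal.ofReal_ne_top) (by simpa using ENNReal.ofReal_le_one.2 hγle1)).2 hP₀
  calc ENNReal.ofReal (1 - γ) < P₀ ({ω | 1 - (1 - γ) ≤ V ω} ∩ {ω | Y ω ∉ A}) := by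
        rw [hset']; exact hlt
    _ ≤ ⨆ P ∈ 𝓟, P ({ω | 1 - (1 - γ) ≤ V ω} ∩ {ω | Y ω ∉ A}) :=
        le_biSup (fun P : Measure Ω => P ({ω | 1 - (1 - γ) ≤ V ω} ∩ {ω | Y ω ∉ A})) hP₀mem
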